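/- Let k ≥ 3 and m ≥ (432k)² be integers with m − k + 3 divisible by 3. Then ρ(F^{k−3}_{(m−k+3)/3}) is the largest root of x³ − x² + (1 − (2/3)m − (1/3)k)x + k − 3 = 0, and moreover ρ(F^{k−3}_{(m−k+3)/3}) < √(m − k). -/

import Mathlib

open SimpleGraph

/-- The `l`-edge-connectivity of a graph: the minimum number of edges whose removal
leaves a graph with at least `l` connected components, if the graph has at least `l`
vertices; otherwise the number of vertices. -/
noncomputable def edgeConnL {V : Type*} (l : ℕ) (G : SimpleGraph V) : ℕ :=
  if l ≤ Nat.card V then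
    sInf {c : ℕ | ∃ F : Set (Sym2 V), F ⊆ G.edgeSet ∧ F.ncard = c ∧
      l ≤ Nat.card (G.deleteEdges F).ConnectedComponent}
  else Nat.card V

/-- A graph is minimally `(k,l)`-edge-connected if it is connected, its
`l`-edge-connectivity is at least `k`, and deleting any edge drops the
`l`-edge-connectivity below `k`. -/
def IsMinimallyKLEdgeConnected {V : Type*} (k l : ℕ) (G : SimpleGraph V) : Prop :=
  G.Connected ∧ k ≤ edgeConnL l G ∧
    ∀ e ∈ G.edgeSet, edgeConnL l (G.deleteEdges {e}) < k

/-- The real adjacency matrix of a simple graph. -/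
noncomputable def adjMat {V : Type*} (G : SimpleGraph V) : Matrix V V ℝ :=
  letI := Classical.decRel G.Adj
  G.adjMatrix ℝ

/-- The spectral radius of a graph: the largest (real) eigenvalue of its adjacency matrix. -/
noncomputable def specRad {V : Type*} [Fintype V] [DecidableEq V]
    (G : SimpleGraph V) : ℝ :=
  sSup (spectrum ℝ (adjMat G))

abbrev FriendPendV (t p : ℕ) : Type := Unit ⊕ ((Fin t × Fin 2) ⊕ Fin p)

/-- `F^{p}_{t}`: the graph obtained from the disjoint union of the star `K_{1,p}` and the
friendship graph consisting of `t` triangles sharing one common apex, by identifying the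
centre of the star with the apex.  Here `Sum.inl _` is the apex, `(i, _) : Fin t × Fin 2`
are the two outer vertices of the `i`-th triangle, and `Fin p` are the pendant vertices. -/
def FriendPend (t p : ℕ) : SimpleGraph (FriendPendV t p) :=
  SimpleGraph.fromRel (fun a b =>
    match a, b with
    | Sum.inl _, Sum.inr _ => True
    | Sum.inr (Sum.inl (i, _)), Sum.inr (Sum.inl (j, _)) => i = j
    | _, _ => False)

lemma cubic_greatest (A P : ℝ) (hA : 2 ≤ A) (hP : 0 ≤ P) (hPA : P + 2 ≤ A) :
    (IsGreatest {x : ℝ | x^3 - x^2 - A*x + P = 0} (sSup {x : ℝ | x^3 - x^2 - A*x + P = 0}))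
    ∧ 1 < sSup {x : ℝ | x^3 - x^2 - A*x + P = 0} := by
  set S := {x : ℝ | x^3 - x^2 - A*x + P = 0} with hS
  have hcont : Continuous fun x : ℝ => x^3 - x^2 - A*x + P := by continuity
  have hclosed : IsClosed S := isClosed_eq hcont continuous_const
  have hsub : S ⊆ Set.Icc (-(A+2)) (A+2) := by
    intro x hx
    simp only [hS, Set.mem_setOf_eq] at hx
    constructor
    · by_contra h
      push_neg at h
      nlinarith [sq_nonneg x, sq_nonneg (x+1), mul_pos (show (0:ℝ) < -x by nlinarith) (show (0:ℝ) < -x - A - 2 by linarith)]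
    · by_contra h
      push_neg at h
      nlinarith [sq_nonneg x, mul_pos (show (0:ℝ) < x by nlinarith) (show (0:ℝ) < x - A - 2 by linarith)]
  have hcompact : IsCompact S := IsCompact.of_isClosed_subset isCompact_Icc hclosed hsub
  have hg1 : (1:ℝ)^3 - 1^2 - A*1 + P < 0 := by nlinarith
  have hgB : 0 ≤ (A+2)^3 - (A+2)^2 - A*(A+2) + P := by nlinarith
  obtain ⟨c, hc, hc0⟩ := intermediate_value_Icc (show (1:ℝ) ≤ A + 2 by linarith)
    hcont.continuousOn (Set.mem_Icc.mpr ⟨le_of_lt hg1, hgB⟩)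
  have hcS : c ∈ S := hc0
  have hne : S.Nonempty := ⟨c, hcS⟩
  have hgr : IsGreatest S (sSup S) :=
    ⟨hcompact.sSup_mem hne, fun x hx => le_csSup hcompact.bddAbove hx⟩
  refine ⟨hgr, ?_⟩
  have hc1 : 1 < c := by
    rcases lt_or_eq_of_le hc.1 with h | h
    · exact h
    · exfalso; rw [← h] at hc0; simp only [Set.mem_setOf_eq] at hc0; linarith [hc0]
  exact lt_of_lt_of_le hc1 (le_csSup hcompact.bddAbove hcS)

section FP
variable {t p : ℕ}

lemma adj_tri_tri (i j : Fin t) (s s' : Fin 2) :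
    (FriendPend t p).Adj (Sum.inr (Sum.inl (i,s))) (Sum.inr (Sum.inl (j,s'))) ↔
      (j, s') = (i, 1 - s) := by
  have hne : ∀ a b : Fin 2, a ≠ b ↔ b = 1 - a := by decide
  simp only [FriendPend, SimpleGraph.fromRel_adj, ne_eq, Sum.inr.injEq, Sum.inl.injEq,
    Prod.mk.injEq]
  constructor
  · rintro ⟨h1, h2⟩
    have hij : i = j := by tauto
    subst hij
    have hss : s ≠ s' := fun h => h1 ⟨rfl, h⟩
    exact ⟨rfl, (hne s s').mp hss⟩
  · rintro ⟨rfl, h⟩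
    have hss : s ≠ s' := (hne s s').mpr h
    exact ⟨fun hc => hss hc.2, Or.inl rfl⟩

lemma mulVec_apex (v : FriendPendV t p → ℝ) :
    (adjMat (FriendPend t p)).mulVec v (Sum.inl ()) =
      (∑ x : Fin t × Fin 2, v (Sum.inr (Sum.inl x))) + ∑ j : Fin p, v (Sum.inr (Sum.inr j)) := by
  classical
  simp [adjMat, Matrix.mulVec, dotProduct, SimpleGraph.adjMatrix_apply, SimpleGraph.adjMatrix,
    Fintype.sum_sum_type, FriendPend, SimpleGraph.fromRel_adj]

lemma mulVec_pend (v : FriendPendV t p → ℝ) (j : Fin p) :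
    (adjMat (FriendPend t p)).mulVec v (Sum.inr (Sum.inr j)) = v (Sum.inl ()) := by
  classical
  simp [adjMat, Matrix.mulVec, dotProduct, SimpleGraph.adjMatrix_apply, SimpleGraph.adjMatrix,
    Fintype.sum_sum_type, FriendPend, SimpleGraph.fromRel_adj]

lemma mulVec_tri (v : FriendPendV t p → ℝ) (i : Fin t) (s : Fin 2) :
    (adjMat (FriendPend t p)).mulVec v (Sum.inr (Sum.inl (i, s))) =
      v (Sum.inl ()) + v (Sum.inr (Sum.inl (i, 1 - s))) := by
  classical
  simp only [adjMat, Matrix.mulVec, dotProduct, SimpleGraph.adjMatrix_apply,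
    Fintype.sum_sum_type]
  have h1 : ∀ x : Fin t × Fin 2,
      (if (FriendPend t p).Adj (Sum.inr (Sum.inl (i,s))) (Sum.inr (Sum.inl x)) then (1:ℝ) else 0)
        * v (Sum.inr (Sum.inl x))
      = if x = (i, 1-s) then v (Sum.inr (Sum.inl x)) else 0 := by
    rintro ⟨j, s'⟩
    rw [adj_tri_tri]
    split <;> simp_all
  rw [Finset.sum_congr rfl (fun x _ => h1 x),
    Finset.sum_ite_eq' Finset.univ ((i, 1-s)) (fun x => v (Sum.inr (Sum.inl x)))]
  simp [FriendPend, SimpleGraph.fromRel_adj]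

lemma friendPend_isGreatest_spectrum (t p : ℕ) (ht : 1 ≤ t) (lam : ℝ) (hlam1 : 1 < lam)
    (hgr : IsGreatest {x : ℝ | x^3 - x^2 - (2*(t:ℝ)+(p:ℝ))*x + (p:ℝ) = 0} lam) :
    IsGreatest (spectrum ℝ (adjMat (FriendPend t p))) lam := by
  classical
  have hroot : lam^3 - lam^2 - (2*(t:ℝ)+(p:ℝ))*lam + (p:ℝ) = 0 := hgr.1
  constructor
  · -- membership: eigenvector
    set v : FriendPendV t p → ℝ := fun u =>
      match u with
      | Sum.inl _ => lam * (lam - 1)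
      | Sum.inr (Sum.inl _) => lam
      | Sum.inr (Sum.inr _) => lam - 1 with hv
    have hv0 : v ≠ 0 := by
      intro h
      have := congrFun h (Sum.inl ())
      simp only [hv, Pi.zero_apply] at this
      nlinarith
    have hev : (adjMat (FriendPend t p)).mulVec v = lam • v := by
      funext u
      rcases u with ⟨⟩ | x
      · rw [mulVec_apex]
        simp only [hv, Pi.smul_apply, smul_eq_mul, Finset.sum_const, Finset.card_univ,
          Fintype.card_prod, Fintype.card_fin, nsmul_eq_mul]
        push_cast
        linear_combination -hroot
      · rcases x with ⟨i, s⟩ | j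
        · rw [mulVec_tri]
          simp only [hv, Pi.smul_apply, smul_eq_mul]
          try ring
        · rw [mulVec_pend]
          simp only [hv, Pi.smul_apply, smul_eq_mul]
          try ring
    rw [spectrum.mem_iff]
    intro hunit
    rw [Matrix.isUnit_iff_isUnit_det] at hunit
    have hdet : (algebraMap ℝ (Matrix (FriendPendV t p) (FriendPendV t p) ℝ) lam
        - adjMat (FriendPend t p)).det = 0 := by
      rw [← Matrix.exists_mulVec_eq_zero_iff]
      refine ⟨v, hv0, ?_⟩
      rw [Matrix.sub_mulVec, Algebra.algebraMap_eq_smul_one, Matrix.smul_mulVec,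
        Matrix.one_mulVec, hev, sub_self]
    rw [hdet] at hunit
    simp at hunit
  · -- upper bound
    intro mu hmu
    by_contra hcon
    push_neg at hcon
    have hmu1 : 1 < mu := lt_trans hlam1 hcon
    rw [spectrum.mem_iff, Matrix.isUnit_iff_isUnit_det] at hmu
    have hdet : (algebraMap ℝ (Matrix (FriendPendV t p) (FriendPendV t p) ℝ) mu
        - adjMat (FriendPend t p)).det = 0 := by
      by_contra h'
      exact hmu (isUnit_iff_ne_zero.mpr h')
    rw [← Matrix.exists_mulVec_eq_zero_iff] at hdet
    obtain ⟨v, hvne, hveq⟩ := hdet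
    rw [Matrix.sub_mulVec, Algebra.algebraMap_eq_smul_one, Matrix.smul_mulVec,
      Matrix.one_mulVec, sub_eq_zero] at hveq
    have hev : ∀ u, (adjMat (FriendPend t p)).mulVec v u = mu * v u := by
      intro u; rw [← hveq]; simp
    set v0 := v (Sum.inl ()) with hv0def
    have hpend : ∀ j : Fin p, mu * v (Sum.inr (Sum.inr j)) = v0 := by
      intro j
      have := hev (Sum.inr (Sum.inr j))
      rw [mulVec_pend] at this
      linarith
    have hinv : ∀ s : Fin 2, 1 - (1 - s) = s := by decide
    have htri : ∀ (i : Fin t) (s : Fin 2),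
        v0 + v (Sum.inr (Sum.inl (i, 1 - s))) = mu * v (Sum.inr (Sum.inl (i, s))) := by
      intro i s
      have := hev (Sum.inr (Sum.inl (i, s)))
      rw [mulVec_tri] at this
      linarith
    have hall : ∀ x : Fin t × Fin 2, (mu - 1) * v (Sum.inr (Sum.inl x)) = v0 := by
      rintro ⟨i, s⟩
      have h1 := htri i s
      have h2 := htri i (1 - s)
      rw [hinv s] at h2
      have hdiff : (mu + 1) * (v (Sum.inr (Sum.inl (i, s))) - v (Sum.inr (Sum.inl (i, 1-s)))) = 0 := by
        linear_combination h2 - h1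
      have hne : mu + 1 ≠ 0 := by linarith
      have heq : v (Sum.inr (Sum.inl (i, s))) = v (Sum.inr (Sum.inl (i, 1-s))) := by
        rcases mul_eq_zero.mp hdiff with h | h
        · exact absurd h hne
        · linarith
      linear_combination -h1 - heq
    have hv0ne : v0 ≠ 0 := by
      intro h0
      apply hvne
      funext u
      rcases u with ⟨⟩ | x
      · exact h0
      · rcases x with x | j
        · have := hall x
          rw [h0] at this
          have : v (Sum.inr (Sum.inl x)) = 0 := by
            rcases mul_eq_zero.mp this with h | h
            · exfalso; exact absurd h (by linarith : mu - 1 ≠ 0)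
            · exact h
          exact this
        · have := hpend j
          rw [h0] at this
          rcases mul_eq_zero.mp this with h | h
          · exfalso; exact absurd h (by linarith : mu ≠ 0)
          · exact h
    -- apex equation
    have happex := hev (Sum.inl ())
    rw [mulVec_apex] at happex
    set Ss := ∑ x : Fin t × Fin 2, v (Sum.inr (Sum.inl x)) with hSs
    set Sp := ∑ j : Fin p, v (Sum.inr (Sum.inr j)) with hSp
    have e1 : (mu - 1) * Ss = 2*(t:ℝ) * v0 := by
      rw [hSs, Finset.mul_sum, Finset.sum_congr rfl (fun x _ => hall x), Finset.sum_const,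
        Finset.card_univ, Fintype.card_prod, Fintype.card_fin, Fintype.card_fin, nsmul_eq_mul]
      push_cast; ring
    have e2 : mu * Sp = (p:ℝ) * v0 := by
      rw [hSp, Finset.mul_sum, Finset.sum_congr rfl (fun j _ => hpend j), Finset.sum_const,
        Finset.card_univ, Fintype.card_fin, nsmul_eq_mul]
    have key : v0 * (mu^3 - mu^2 - (2*(t:ℝ)+(p:ℝ))*mu + (p:ℝ)) = 0 := by
      linear_combination mu * e1 + (mu - 1) * e2 - mu * (mu - 1) * happex
    rcases mul_eq_zero.mp key with h | h
    · exact hv0ne h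
    · exact absurd (hgr.2 h) (not_le.mpr hcon)

end FP


set_option maxHeartbeats 1000000 in
/-- Let `k ≥ 3` and `m ≥ (432k)²` with `m − k + 3` divisible by 3, say
`m − k + 3 = 3t`.  Then `ρ(F^{k−3}_{(m−k+3)/3})` is the largest root of
`x³ − x² + (1 − (2/3)m − (1/3)k)x + k − 3 = 0`, and moreover
`ρ(F^{k−3}_{(m−k+3)/3}) < √(m − k)`. -/
theorem spectral_radius_FriendPend_size (k m t : ℕ) (hk : 3 ≤ k)
    (hm : (432 * k) ^ 2 ≤ m) (ht : 3 * t = m - k + 3) :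
    IsGreatest {x : ℝ | x ^ 3 - x ^ 2 +
        (1 - (2 / 3) * (m : ℝ) - (1 / 3) * (k : ℝ)) * x + (k : ℝ) - 3 = 0}
      (specRad (FriendPend t (k - 3))) ∧
    specRad (FriendPend t (k - 3)) < Real.sqrt ((m : ℝ) - (k : ℝ)) := by
  classical
  set p : ℕ := k - 3 with hpdef
  -- basic numeric facts
  have hkm : k ≤ m := le_trans (by nlinarith) hm
  have ht1 : 1 ≤ t := by omega
  have hK3 : (3:ℝ) ≤ (k:ℝ) := by exact_mod_cast hk
  have hMbig : 432^2 * (k:ℝ)^2 ≤ (m:ℝ) := by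
    have h : ((432*k:ℕ)^2 : ℝ) ≤ (m:ℝ) := by exact_mod_cast hm
    push_cast at h
    nlinarith [h]
  have hKM : 559872 * (k:ℝ) ≤ (m:ℝ) := by nlinarith
  have hM0 : (1679616:ℝ) ≤ (m:ℝ) := by nlinarith
  have hp : (p:ℝ) = (k:ℝ) - 3 := by
    rw [hpdef]; push_cast [Nat.cast_sub hk]; ring
  have h3t : 3*(t:ℝ) = (m:ℝ) - (k:ℝ) + 3 := by
    have := congrArg (Nat.cast : ℕ → ℝ) ht
    push_cast [Nat.cast_sub hkm] at this
    linarith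
  have hp0 : (0:ℝ) ≤ (p:ℝ) := Nat.cast_nonneg p
  set A : ℝ := 2*(t:ℝ) + (p:ℝ) with hA
  set S : Set ℝ := {x : ℝ | x^3 - x^2 - A*x + (p:ℝ) = 0} with hSdef
  have ht1' : (1:ℝ) ≤ (t:ℝ) := by exact_mod_cast ht1
  have hgrc := cubic_greatest A (p:ℝ) (by rw [hA]; linarith) hp0 (by rw [hA]; linarith)
  set lam : ℝ := sSup S with hlam
  have hgr : IsGreatest S lam := hgrc.1
  have hlam1 : 1 < lam := hgrc.2
  have hspec : IsGreatest (spectrum ℝ (adjMat (FriendPend t p))) lam :=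
    friendPend_isGreatest_spectrum t p ht1 lam hlam1 hgr
  have hsr : specRad (FriendPend t p) = lam := by
    rw [specRad]; exact hspec.csSup_eq
  -- the two root sets coincide
  have hsets : {x : ℝ | x ^ 3 - x ^ 2 +
      (1 - (2 / 3) * (m : ℝ) - (1 / 3) * (k : ℝ)) * x + (k : ℝ) - 3 = 0} = S := by
    ext x
    simp only [hSdef, Set.mem_setOf_eq, hA]
    constructor <;> intro h
    · linear_combination h - (2*x/3) * h3t - (x - 1) * hp
    · linear_combination h + (2*x/3) * h3t + (x - 1) * hp
  refine ⟨by rw [hsets, hsr]; exact hgr, ?_⟩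
  -- the sqrt bound
  rw [hsr]
  set s : ℝ := Real.sqrt ((m:ℝ) - (k:ℝ)) with hs
  have hMK0 : (0:ℝ) ≤ (m:ℝ) - (k:ℝ) := by
    have : (k:ℝ) ≤ (m:ℝ) := by exact_mod_cast hkm
    linarith
  have hs0 : 0 ≤ s := Real.sqrt_nonneg _
  have hs2 : s^2 = (m:ℝ) - (k:ℝ) := Real.sq_sqrt hMK0
  have hrhspos : (0:ℝ) < ((m:ℝ) - 4*(k:ℝ) + 3)/3 := by nlinarith
  have hrhssq : (m:ℝ) - (k:ℝ) < (((m:ℝ) - 4*(k:ℝ) + 3)/3)^2 := by nlinarith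
  have hsroot : s < ((m:ℝ) - 4*(k:ℝ) + 3)/3 := by
    nlinarith [hs2, hs0, hrhspos, hrhssq]
  by_contra hcon
  push_neg at hcon
  -- hcon : s ≤ lam
  have hroot : lam^3 - lam^2 - A*lam + (p:ℝ) = 0 := hgr.1
  have hAval : A = (2*(m:ℝ) + (k:ℝ) - 3)/3 := by rw [hA]; linarith
  have hmono : s^2 - s ≤ lam^2 - lam := by nlinarith [mul_nonneg (sub_nonneg.mpr hcon) (by linarith : (0:ℝ) ≤ lam + s - 1)]
  have hposfac : 0 < lam^2 - lam - A := by
    rw [hAval]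
    nlinarith [hs2, hsroot, hmono]
  nlinarith [hroot, hposfac, hlam1, hp0]
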